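/- Let f : ℝ³ → ℝ be differentiable and nowhere zero, V : ℝ² → ℝ differentiable with V > 0, and l(q,p) = (∂f/∂p₁)(p)·q₂ − (∂f/∂p₂)(p)·q₁. Let Ω be the 6×6 matrix Ω(q,p) = (1/f(p)) · [[0,0,0,−1,0,0],[0,0,0,0,−1,0],[0,0,0,0,0,−1],[1,0,0,0,0,0],[0,1,0,0,0,l/f],[0,0,1,0,−l/f,0]] on ℝ⁶ with coordinates (q₀,q₁,q₂,p₀,p₁,p₂), and let ι : ℝ⁴ → ℝ⁶ be the embedding ι(q₁,q₂,p₁,p₂) = (0, q₁, q₂, √(p₁²+p₂²+V(q₁,q₂)), p₁, p₂) of the submanifold N = {H = 0, p₀ > 0, q₀ = 0}. Then for every x ∈ ℝ⁴ and all u, v ∈ ℝ⁴ (components ordered (q₁,q₂,p₁,p₂)): (Dι(x)·u)ᵀ · Ω(ι(x)) · (Dι(x)·v) = uᵀ · Ω_N(x) · v, where Ω_N(x) = (1/f) · [[0,0,−1,0],[0,0,0,−1],[1,0,0,l/f],[0,1,−l/f,0]] with f and l evaluated at ι(x). That is, the symplectic form induced on the reduced phase space N is ω|_N = (1/f)(dp₁∧dq₁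 + dp₂∧dq₂ + (l/f)·dp₁∧dp₂), of the same functional form as the original deformed symplectic form. -/

import Mathlib

open Matrix

/-- The closure-condition function `l(q,p) = (∂f/∂p₁)(p)·q₂ − (∂f/∂p₂)(p)·q₁` on the phase
space `ℝ⁶` with coordinates `(q₀,q₁,q₂,p₀,p₁,p₂)`. -/
noncomputable def lfun (f : (Fin 3 → ℝ) → ℝ) (x : Fin 6 → ℝ) : ℝ :=
  fderiv ℝ f ![x 3, x 4, x 5] (Pi.single 1 1) * x 2 -
    fderiv ℝ f ![x 3, x 4, x 5] (Pi.single 2 1) * x 1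

/-- Matrix of the deformed symplectic form of the GUP Bianchi model in Misner variables. -/
noncomputable def OmegaB (f : (Fin 3 → ℝ) → ℝ) (x : Fin 6 → ℝ) : Matrix (Fin 6) (Fin 6) ℝ :=
  (f ![x 3, x 4, x 5])⁻¹ •
    !![0, 0, 0, -1, 0, 0;
       0, 0, 0, 0, -1, 0;
       0, 0, 0, 0, 0, -1;
       1, 0, 0, 0, 0, 0;
       0, 1, 0, 0, 0, lfun f x / f ![x 3, x 4, x 5];
       0, 0, 1, 0, -(lfun f x / f ![x 3, x 4, x 5]), 0]

/-- The embedding `ι(q₁,q₂,p₁,p₂) = (0, q₁, q₂, √(p₁²+p₂²+V(q₁,q₂)), p₁, p₂)` of the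
submanifold `N = {H = 0, p₀ > 0, q₀ = 0}`. -/
noncomputable def iota4 (V : (Fin 2 → ℝ) → ℝ) (y : Fin 4 → ℝ) : Fin 6 → ℝ :=
  ![0, y 0, y 1,
    Real.sqrt ((y 2) ^ 2 + (y 3) ^ 2 + V ![y 0, y 1]),
    y 2, y 3]

/-- Matrix of the symplectic form induced on the reduced phase space `N`, with `f` and `l`
evaluated at `ι(x)`: `ω|_N = (1/f)(dp₁∧dq₁ + dp₂∧dq₂ + (l/f)·dp₁∧dp₂)`. -/
noncomputable def OmegaN18 (f : (Fin 3 → ℝ) → ℝ) (V : (Fin 2 → ℝ) → ℝ) (y : Fin 4 → ℝ) :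
    Matrix (Fin 4) (Fin 4) ℝ :=
  let x := iota4 V y
  let fp := f ![x 3, x 4, x 5]
  let l := lfun f x
  fp⁻¹ • !![0, 0, -1, 0;
            0, 0, 0, -1;
            1, 0, 0, l / fp;
            0, 1, -(l / fp), 0]

lemma cv2_1 {α : Type*} (a : α) (s : Fin 1 → α) :
    Matrix.vecCons a s 1 = s 0 := rfl

lemma cv3_1 {α : Type*} (a : α) (s : Fin 2 → α) :
    Matrix.vecCons a s 1 = s 0 := rfl

lemma cv3_2 {α : Type*} (a : α) (s : Fin 2 → α) :
    Matrix.vecCons a s 2 = s 1 := rfl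

lemma cv4_1 {α : Type*} (a : α) (s : Fin 3 → α) :
    Matrix.vecCons a s 1 = s 0 := rfl

lemma cv4_2 {α : Type*} (a : α) (s : Fin 3 → α) :
    Matrix.vecCons a s 2 = s 1 := rfl

lemma cv4_3 {α : Type*} (a : α) (s : Fin 3 → α) :
    Matrix.vecCons a s 3 = s 2 := rfl

lemma cv5_1 {α : Type*} (a : α) (s : Fin 4 → α) :
    Matrix.vecCons a s 1 = s 0 := rfl

lemma cv5_2 {α : Type*} (a : α) (s : Fin 4 → α) :
    Matrix.vecCons a s 2 = s 1 := rfl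

lemma cv5_3 {α : Type*} (a : α) (s : Fin 4 → α) :
    Matrix.vecCons a s 3 = s 2 := rfl

lemma cv5_4 {α : Type*} (a : α) (s : Fin 4 → α) :
    Matrix.vecCons a s 4 = s 3 := rfl

lemma cv6_1 {α : Type*} (a : α) (s : Fin 5 → α) :
    Matrix.vecCons a s 1 = s 0 := rfl

lemma cv6_2 {α : Type*} (a : α) (s : Fin 5 → α) :
    Matrix.vecCons a s 2 = s 1 := rfl

lemma cv6_3 {α : Type*} (a : α) (s : Fin 5 → α) :
    Matrix.vecCons a s 3 = s 2 := rfl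

lemma cv6_4 {α : Type*} (a : α) (s : Fin 5 → α) :
    Matrix.vecCons a s 4 = s 3 := rfl

lemma cv6_5 {α : Type*} (a : α) (s : Fin 5 → α) :
    Matrix.vecCons a s 5 = s 4 := rfl


set_option maxHeartbeats 1000000 in
/-- The pullback of the deformed symplectic form of the GUP Bianchi model along the embedding
`ι` of the reduced phase space `N = {H = 0, p₀ > 0, q₀ = 0}` equals the reduced matrix
`Ω_N`: `(Dι(x)·u)ᵀ·Ω(ι(x))·(Dι(x)·v) = uᵀ·Ω_N(x)·v` — the induced symplectic form has the
same functional form as the original deformed one. -/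
theorem stmt_18 (f : (Fin 3 → ℝ) → ℝ) (hf : Differentiable ℝ f) (hf0 : ∀ p, f p ≠ 0)
    (V : (Fin 2 → ℝ) → ℝ) (hV : Differentiable ℝ V) (hVpos : ∀ y, 0 < V y) :
    ∀ x u v : Fin 4 → ℝ,
      (fderiv ℝ (iota4 V) x u) ⬝ᵥ (OmegaB f (iota4 V x)).mulVec (fderiv ℝ (iota4 V) x v) =
        u ⬝ᵥ (OmegaN18 f V x).mulVec v := by
  have hproj : ∀ i : Fin 4, Differentiable ℝ (fun y : Fin 4 → ℝ => y i) :=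
    fun i => (ContinuousLinearMap.proj i : (Fin 4 → ℝ) →L[ℝ] ℝ).differentiable
  have hp : ∀ (i : Fin 4) (x u : Fin 4 → ℝ),
      fderiv ℝ (fun y : Fin 4 → ℝ => y i) x u = u i := by
    intro i x u
    rw [show (fun y : Fin 4 → ℝ => y i)
        = (ContinuousLinearMap.proj i : (Fin 4 → ℝ) →L[ℝ] ℝ) from rfl,
      ContinuousLinearMap.fderiv]
    rfl
  have hg : Differentiable ℝ (fun y : Fin 4 → ℝ => (y 2)^2 + (y 3)^2 + V ![y 0, y 1]) := by
    apply Differentiable.add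
    · exact ((hproj 2).pow 2).add ((hproj 3).pow 2)
    · apply hV.comp
      rw [differentiable_pi]
      intro i
      fin_cases i <;> simp <;> exact hproj _
  intro x u v
  have hcoord : ∀ i : Fin 6, DifferentiableAt ℝ (fun y => iota4 V y i) x := by
    intro i
    fin_cases i <;> simp only [iota4, Matrix.cons_val_zero, Matrix.cons_val_one,
      Matrix.head_cons, Matrix.cons_val_two, Matrix.tail_cons, Matrix.cons_val_three,
      Matrix.cons_val_four]
    · exact differentiableAt_const 0
    · exact (hproj 0).differentiableAt
    · exact (hproj 1).differentiableAt
    · exact (hg x).sqrt (ne_of_gt (by have := hVpos ![x 0, x 1]; positivity))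
    · exact (hproj 2).differentiableAt
    · exact (hproj 3).differentiableAt
  have hD : ∀ w : Fin 4 → ℝ, ∀ i : Fin 6,
      fderiv ℝ (iota4 V) x w i = fderiv ℝ (fun y => iota4 V y i) x w := by
    intro w i
    rw [fderiv_pi hcoord]
    rfl
  have key : ∀ w : Fin 4 → ℝ,
      fderiv ℝ (iota4 V) x w 0 = 0 ∧ fderiv ℝ (iota4 V) x w 1 = w 0 ∧
      fderiv ℝ (iota4 V) x w 2 = w 1 ∧ fderiv ℝ (iota4 V) x w 4 = w 2 ∧
      fderiv ℝ (iota4 V) x w 5 = w 3 := by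
    intro w
    refine ⟨?_, ?_, ?_, ?_, ?_⟩ <;> rw [hD]
    · rw [show (fun y => iota4 V y 0) = (fun _ : Fin 4 → ℝ => (0:ℝ)) from rfl,
        fderiv_fun_const]
      rfl
    · rw [show (fun y => iota4 V y 1) = (fun y : Fin 4 → ℝ => y 0) from rfl, hp]
    · rw [show (fun y => iota4 V y 2) = (fun y : Fin 4 → ℝ => y 1) from rfl, hp]
    · rw [show (fun y => iota4 V y 4) = (fun y : Fin 4 → ℝ => y 2) from rfl, hp]
    · rw [show (fun y => iota4 V y 5) = (fun y : Fin 4 → ℝ => y 3) from rfl, hp]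
  obtain ⟨hu0, hu1, hu2, hu4, hu5⟩ := key u
  obtain ⟨hv0, hv1, hv2, hv4, hv5⟩ := key v
  simp [OmegaB, OmegaN18, Matrix.mulVec, dotProduct, Fin.sum_univ_six,
    Fin.sum_univ_four, cv2_1, cv3_1, cv3_2, cv4_1, cv4_2, cv4_3, cv5_1, cv5_2, cv5_3, cv5_4, cv6_1, cv6_2, cv6_3, cv6_4, cv6_5, hu0, hu1, hu2, hu4, hu5, hv0, hv1, hv2, hv4, hv5, Matrix.vecHead, Matrix.vecTail]
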